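/- arXiv:2201.08433 — 2 statements merged into one kernel-verified Lean document; each statement's English description precedes it below -/
import Mathlib

section
/- Let (X,d) be a complete metric space and let f_1,...,f_N : X → X be contraction mappings. Then there exists a unique non-empty compact set K ⊆ X such that K = f_1(K) ∪ f_2(K) ∪ ... ∪ f_N(K). -/
open Set EMetric Metric TopologicalSpace

private lemma aux_infEdist_image {X : Type*} [MetricSpace X] {c : NNReal} {g : X → X}
    (hg : LipschitzWith c g) (x : X) (t : Set X) (ht : t.Nonempty) :
    infEdist (g x) (g '' t) ≤ (c : ENNReal) * infEdist x t := by
  obtain ⟨y0, hy0⟩ := ht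
  rcases eq_or_ne (c : ENNReal) 0 with hc | hc
  · rw [hc, zero_mul]
    refine le_trans (infEdist_le_edist_of_mem (mem_image_of_mem g hy0)) ?_
    have := hg.edist_le_mul x y0
    rw [hc, zero_mul] at this
    exact this
  · have h : (c : ENNReal) * infEdist x t = ⨅ y ∈ t, (c : ENNReal) * edist x y := by
      rw [infEdist, infEDist, ENNReal.mul_iInf_of_ne hc ENNReal.coe_ne_top]
      congr 1; ext y
      rw [ENNReal.mul_iInf_of_ne hc ENNReal.coe_ne_top]
    rw [h]
    refine le_iInf₂ fun y hy => ?_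
    exact le_trans (infEdist_le_edist_of_mem (mem_image_of_mem g hy)) (hg.edist_le_mul x y)

private lemma aux_hausdorff_image {X : Type*} [MetricSpace X] {c : NNReal} {g : X → X}
    (hg : LipschitzWith c g) (s t : Set X) (hs : s.Nonempty) (ht : t.Nonempty) :
    hausdorffEdist (g '' s) (g '' t) ≤ (c : ENNReal) * hausdorffEdist s t := by
  refine hausdorffEdist_le_of_infEdist ?_ ?_
  · rintro _ ⟨x, hx, rfl⟩
    exact le_trans (aux_infEdist_image hg x t ht)
      (mul_le_mul_right (infEdist_le_hausdorffEdist_of_mem hx) _)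
  · rintro _ ⟨x, hx, rfl⟩
    refine le_trans (aux_infEdist_image hg x s hs) ?_
    refine mul_le_mul_right ?_ _
    rw [hausdorffEdist, hausdorffEDist_comm]
    exact infEdist_le_hausdorffEdist_of_mem hx

private lemma aux_hausdorff_iUnion {X : Type*} [MetricSpace X] {ι : Type*}
    (s t : ι → Set X) :
    hausdorffEdist (⋃ i, s i) (⋃ i, t i) ≤ ⨆ i, hausdorffEdist (s i) (t i) := by
  refine hausdorffEdist_le_of_infEdist ?_ ?_
  · rintro x hx
    obtain ⟨i, hi⟩ := mem_iUnion.1 hx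
    calc infEdist x (⋃ i, t i) ≤ infEdist x (t i) :=
          infEdist_anti (subset_iUnion t i)
      _ ≤ hausdorffEdist (s i) (t i) := infEdist_le_hausdorffEdist_of_mem hi
      _ ≤ _ := le_iSup (fun i => hausdorffEdist (s i) (t i)) i
  · rintro x hx
    obtain ⟨i, hi⟩ := mem_iUnion.1 hx
    calc infEdist x (⋃ i, s i) ≤ infEdist x (s i) :=
          infEdist_anti (subset_iUnion s i)
      _ ≤ hausdorffEdist (t i) (s i) := infEdist_le_hausdorffEdist_of_mem hi
      _ = hausdorffEdist (s i) (t i) := hausdorffEdist_comm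
      _ ≤ _ := le_iSup (fun i => hausdorffEdist (s i) (t i)) i

/-- Hutchinson's theorem: a finite family of contractions on a complete
metric space has a unique nonempty compact invariant set (the attractor). -/
theorem stmt_0 {X : Type*} [MetricSpace X] [CompleteSpace X] [Nonempty X]
    (N : ℕ) (hN : 0 < N) (f : Fin N → X → X)
    (hf : ∀ i, ∃ c : NNReal, c < 1 ∧ LipschitzWith c (f i)) :
    ∃! K : Set X, K.Nonempty ∧ IsCompact K ∧ K = ⋃ i, f i '' K := by
  haveI : Nonempty (Fin N) := ⟨⟨0, hN⟩⟩
  choose c hc1 hlip using hf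
  -- a common contraction constant
  set C : NNReal := max (Finset.univ.sup c) (1/2) with hC
  have hC1 : C < 1 := by
    refine max_lt ?_ (by rw [← NNReal.coe_lt_coe]; norm_num)
    exact Finset.sup_lt_iff (by norm_num) |>.2 fun i _ => hc1 i
  have hClip : ∀ i, LipschitzWith C (f i) := fun i =>
    (hlip i).weaken (le_max_of_le_left (Finset.le_sup (Finset.mem_univ i)))
  -- the map on nonempty compacts
  set F : NonemptyCompacts X → NonemptyCompacts X := fun K =>
    ⟨⟨⋃ i, f i '' K, isCompact_iUnion fun i => K.isCompact.image (hClip i).continuous⟩,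
      by
        obtain ⟨x, hx⟩ := K.nonempty
        exact ⟨f ⟨0, hN⟩ x, mem_iUnion.2 ⟨⟨0, hN⟩, mem_image_of_mem _ hx⟩⟩⟩ with hF
  have hFlip : LipschitzWith C F := by
    intro K L
    show hausdorffEdist (⋃ i, f i '' (K : Set X)) (⋃ i, f i '' (L : Set X)) ≤
      (C : ENNReal) * hausdorffEdist (K : Set X) (L : Set X)
    refine le_trans (aux_hausdorff_iUnion _ _) ?_
    refine iSup_le fun i => ?_
    exact aux_hausdorff_image (hClip i) _ _ K.nonempty L.nonempty
  have hcontr : ContractingWith C F := ⟨hC1, hFlip⟩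
  haveI : Nonempty (NonemptyCompacts X) :=
    ⟨⟨⟨{Classical.arbitrary X}, isCompact_singleton⟩, singleton_nonempty _⟩⟩
  set K₀ := hcontr.fixedPoint F
  have hfix : F K₀ = K₀ := hcontr.fixedPoint_isFixedPt
  refine ⟨(K₀ : Set X), ⟨K₀.nonempty, K₀.isCompact, ?_⟩, ?_⟩
  · conv_lhs => rw [← hfix]
    rfl
  · rintro K' ⟨hne, hcomp, heq⟩
    set K₁ : NonemptyCompacts X := ⟨⟨K', hcomp⟩, hne⟩
    have : K₁ = K₀ := by
      refine hcontr.fixedPoint_unique ?_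
      show F K₁ = K₁
      apply NonemptyCompacts.ext
      exact heq.symm
    rw [← this]
    rfl
end

section
/- Let G be a finite connected simple graph with vertex set V, a nonempty boundary set V_0 ⊊ V, given boundary data h : V_0 → ℝ and forcing g : V \ V_0 → ℝ. Then the discrete Dirichlet problem Δ_G u (x) = g(x) for x ∈ V \ V_0, u(x) = h(x) for x ∈ V_0, has a unique solution u : V → ℝ. -/
open Matrix

/-- The discrete Dirichlet problem on a finite connected graph with nonempty
boundary `V₀` has a unique solution: `Δ_G u = g` on interior vertices and
`u = h` on boundary vertices. -/
theorem stmt_8 {V : Type*} [Fintype V] [DecidableEq V]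
    (G : SimpleGraph V) [DecidableRel G.Adj] (hG : G.Connected)
    (V₀ : Finset V) (hV₀ : V₀.Nonempty) (hV₀' : ↑V₀ ⊂ (Set.univ : Set V))
    (L : Matrix V V ℝ) (hL : L = G.degMatrix ℝ - G.adjMatrix ℝ)
    (h g : V → ℝ) :
    ∃! u : V → ℝ,
      (∀ x ∉ V₀, (L *ᵥ u) x = g x) ∧ (∀ x ∈ V₀, u x = h x) := by
  have hLlap : L = G.lapMatrix ℝ := hL
  -- the linear map combining boundary and interior conditions
  let T : (V → ℝ) →ₗ[ℝ] (V → ℝ) :=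
    { toFun := fun u x => if x ∈ V₀ then u x else (L *ᵥ u) x
      map_add' := by
        intro u v; funext x
        simp [mulVec_add, Pi.add_apply]
        split <;> simp
      map_smul' := by
        intro c u; funext x
        simp only [mulVec_smul, Pi.smul_apply, RingHom.id_apply]
        split <;> simp }
  -- T is injective
  have hinj : Function.Injective T := by
    rw [← LinearMap.ker_eq_bot, LinearMap.ker_eq_bot']
    intro u hu
    have hu' : ∀ x, (if x ∈ V₀ then u x else (L *ᵥ u) x) = 0 := fun x =>
      congrFun hu x
    have hb : ∀ x ∈ V₀, u x = 0 := by
      intro x hx; simpa [hx] using hu' x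
    have hi : ∀ x ∉ V₀, (L *ᵥ u) x = 0 := by
      intro x hx; simpa [hx] using hu' x
    -- quadratic form vanishes
    have hq : Matrix.toLinearMap₂' ℝ (G.lapMatrix ℝ) u u = 0 := by
      rw [toLinearMap₂'_apply', ← hLlap, dotProduct]
      apply Finset.sum_eq_zero
      intro x _
      by_cases hx : x ∈ V₀
      · rw [hb x hx, zero_mul]
      · rw [hi x hx, mul_zero]
    have hconst := (G.lapMatrix_toLinearMap₂'_apply'_eq_zero_iff_forall_reachable u).mp hq
    obtain ⟨x₀, hx₀⟩ := hV₀
    funext x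
    have : u x = u x₀ := hconst x x₀ (hG x x₀)
    rw [this, hb x₀ hx₀]; rfl
  have hsurj : Function.Surjective T := (LinearMap.injective_iff_surjective).mp hinj
  obtain ⟨u, hu⟩ := hsurj (fun x => if x ∈ V₀ then h x else g x)
  have hu' : ∀ x, (if x ∈ V₀ then u x else (L *ᵥ u) x)
      = (if x ∈ V₀ then h x else g x) := fun x => congrFun hu x
  refine ⟨u, ⟨?_, ?_⟩, ?_⟩
  · intro x hx; simpa [hx] using hu' x
  · intro x hx; simpa [hx] using hu' x
  · rintro v ⟨hv1, hv2⟩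
    apply hinj
    funext x
    show (if x ∈ V₀ then v x else (L *ᵥ v) x) = (if x ∈ V₀ then u x else (L *ᵥ u) x)
    by_cases hx : x ∈ V₀
    · simp only [hx, if_pos]
      rw [hv2 x hx]
      have := hu' x; simp only [hx, if_pos] at this
      rw [this]
    · simp only [hx, if_neg, if_false]
      rw [hv1 x hx]
      have := hu' x; simp only [hx, if_neg, if_false] at this
      rw [this]
end
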